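/- Let a, b, c, d : ℝ → ℝ be differentiable functions satisfying the Riccati system (R) on all of ℝ. Then (a(t) + d(t))² − 4(a(t)·d(t) − b(t)·c(t)) < 0 for every t ∈ ℝ. -/

import Mathlib

/-- For differentiable functions `a, b, c, d : ℝ → ℝ` satisfying the Riccati system
`a' = 1 + a² + bc`, `d' = 1 + d² + bc`, `b' = b(a+d)`, `c' = c(a+d)` on all of `ℝ`,
the discriminant `(a+d)² − 4(a·d − b·c)` is everywhere negative. -/
theorem riccati_discriminant_neg
    (a b c d : ℝ → ℝ)
    (ha : Differentiable ℝ a) (hb : Differentiable ℝ b)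
    (hc : Differentiable ℝ c) (hd : Differentiable ℝ d)
    (hA : ∀ t, deriv a t = 1 + (a t) ^ 2 + b t * c t)
    (hD : ∀ t, deriv d t = 1 + (d t) ^ 2 + b t * c t)
    (hB : ∀ t, deriv b t = b t * (a t + d t))
    (hC : ∀ t, deriv c t = c t * (a t + d t)) :
    ∀ t : ℝ, (a t + d t) ^ 2 - 4 * (a t * d t - b t * c t) < 0 := by
  by_contra hcon
  push_neg at hcon
  obtain ⟨t₀, ht₀⟩ := hcon
  -- Notation
  set s : ℝ → ℝ := fun t => a t + d t with hs_def
  set Δ : ℝ → ℝ := fun t => (a t - d t) ^ 2 + 4 * (b t * c t) with hΔ_def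
  have hΔt₀ : 0 ≤ Δ t₀ := by
    have : (a t₀ + d t₀) ^ 2 - 4 * (a t₀ * d t₀ - b t₀ * c t₀) = Δ t₀ := by
      simp only [hΔ_def]; ring
    linarith [this ▸ ht₀]
  -- derivative of s
  have hs_deriv : ∀ t, HasDerivAt s (2 + (a t) ^ 2 + (d t) ^ 2 + 2 * (b t * c t)) t := by
    intro t
    have h := ((ha t).hasDerivAt).add ((hd t).hasDerivAt)
    rw [hA, hD] at h
    refine h.congr_deriv ?_
    ring
  have hs_cont : Continuous s := (ha.add hd).continuous
  -- derivative of Δ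
  have hΔ_deriv : ∀ t, HasDerivAt Δ (2 * s t * Δ t) t := by
    intro t
    have hu : HasDerivAt (fun t => a t - d t) (deriv a t - deriv d t) t :=
      ((ha t).hasDerivAt).sub ((hd t).hasDerivAt)
    have h1 : HasDerivAt (fun t => (a t - d t) ^ 2)
        (2 * (a t - d t) * (deriv a t - deriv d t)) t := by
      have := hu.pow 2
      refine this.congr_deriv ?_
      push_cast
      ring
    have h2 : HasDerivAt (fun t => 4 * (b t * c t))
        (4 * (deriv b t * c t + b t * deriv c t)) t :=
      (((hb t).hasDerivAt).mul ((hc t).hasDerivAt)).const_mul 4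
    have h := h1.add h2
    refine h.congr_deriv ?_
    rw [hA, hD, hB, hC]
    simp only [hs_def, hΔ_def]
    ring
  -- integrating factor
  set S : ℝ → ℝ := fun t => ∫ u in (0:ℝ)..t, 2 * s u with hS_def
  have hS_deriv : ∀ t, HasDerivAt S (2 * s t) t := by
    intro t
    exact ((hs_cont.const_smul (2:ℝ)).integral_hasStrictDerivAt 0 t).hasDerivAt
  set g : ℝ → ℝ := fun t => Δ t * Real.exp (-S t) with hg_def
  have hg_deriv : ∀ t, HasDerivAt g 0 t := by
    intro t
    have hE : HasDerivAt (fun t => Real.exp (-S t)) (Real.exp (-S t) * -(2 * s t)) t :=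
      ((hS_deriv t).neg).exp
    have h := (hΔ_deriv t).mul hE
    refine h.congr_deriv ?_
    ring
  have hg_diff : Differentiable ℝ g := fun t => (hg_deriv t).differentiableAt
  have hg_const : ∀ t, g t = g t₀ :=
    fun t => is_const_of_deriv_eq_zero hg_diff (fun t => (hg_deriv t).deriv) t t₀
  -- Δ is everywhere nonnegative
  have hΔ_nonneg : ∀ t, 0 ≤ Δ t := by
    intro t
    have h1 : Δ t * Real.exp (-S t) = Δ t₀ * Real.exp (-S t₀) := hg_const t
    have h2 : 0 ≤ Δ t₀ * Real.exp (-S t₀) := mul_nonneg hΔt₀ (Real.exp_pos _).le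
    nlinarith [Real.exp_pos (-S t)]
  -- monotone comparison function
  set k : ℝ → ℝ := fun t => Real.arctan (s t / 2) - t with hk_def
  have hk_deriv : ∀ t, HasDerivAt k
      (1 / (1 + (s t / 2) ^ 2) * ((2 + (a t) ^ 2 + (d t) ^ 2 + 2 * (b t * c t)) / 2) - 1) t := by
    intro t
    have h1 : HasDerivAt (fun t => s t / 2)
        ((2 + (a t) ^ 2 + (d t) ^ 2 + 2 * (b t * c t)) / 2) t := (hs_deriv t).div_const 2
    have h2 := (Real.hasDerivAt_arctan (s t / 2)).comp t h1
    exact h2.sub (hasDerivAt_id t)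
  have hk_diff : Differentiable ℝ k := fun t => (hk_deriv t).differentiableAt
  have hk_mono : Monotone k := by
    apply monotone_of_deriv_nonneg hk_diff
    intro t
    rw [(hk_deriv t).deriv]
    have hΔ := hΔ_nonneg t
    simp only [hΔ_def] at hΔ
    have hpos : (0:ℝ) < 1 + (s t / 2) ^ 2 := by positivity
    rw [sub_nonneg, div_mul_eq_mul_div, one_mul, le_div_iff₀ hpos]
    simp only [hs_def]
    nlinarith
  -- contradiction from boundedness of arctan
  have h4 := hk_mono (le_add_of_nonneg_right (by norm_num : (0:ℝ) ≤ 4) : t₀ ≤ t₀ + 4)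
  simp only [hk_def] at h4
  have hub := Real.arctan_lt_pi_div_two (s (t₀ + 4) / 2)
  have hlb := Real.neg_pi_div_two_lt_arctan (s t₀ / 2)
  have hpi := Real.pi_lt_d2
  norm_num at hpi
  linarith
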